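/- Under the same hypotheses, the operator P maps S into itself: for x ∈ S, Px is continuous, |(Px)(t)| ≤ δK + αL ≤ L for all t ≥ t₀, and (Px)(t) → 0 as t → ∞. -/

import Mathlib

/-- The operator P maps S into itself. -/
theorem stmt_11 (a b f : ℝ → ℝ) (t₀ L K_L α φ₀ δ KK : ℝ)
    (ha : Continuous a) (hb : Continuous b)
    (hH3 : Filter.Tendsto (fun t => ∫ s in t₀..t, a s) Filter.atTop Filter.atTop)
    (hL : 0 < L) (hKL : 0 < K_L)
    (hf0 : f 0 = 0)
    (hflip : ∀ u v : ℝ, |u| ≤ L → |v| ≤ L → |f u - f v| ≤ K_L * |u - v|)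
    (hα0 : 0 < α) (hα1 : α < 1)
    (hαint : ∀ t ≥ t₀, K_L * ∫ s in t₀..t, Real.exp (-∫ u in s..t, a u) * |b s| ≤ α)
    (hKK : KK = sSup ((fun t => Real.exp (-∫ u in t₀..t, a u)) '' Set.Ici t₀))
    (hδ0 : 0 < δ) (hδL : δ < L) (hδK : δ * KK + α * L ≤ L)
    (hφ : |φ₀| ≤ δ)
    (P : (ℝ → ℝ) → ℝ → ℝ)
    (hP : ∀ z t, P z t = Real.exp (-∫ u in t₀..t, a u) * φ₀ +
      ∫ s in t₀..t, Real.exp (-∫ u in s..t, a u) * (b s * f (z s)))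
    (x : ℝ → ℝ)
    (hxc : ContinuousOn x (Set.Ici t₀)) (hxφ : x t₀ = φ₀)
    (hxL : ∀ t ≥ t₀, |x t| ≤ L) (hx0 : Filter.Tendsto x Filter.atTop (nhds 0)) :
    ContinuousOn (P x) (Set.Ici t₀) ∧ P x t₀ = φ₀ ∧
    (∀ t ≥ t₀, |P x t| ≤ δ * KK + α * L) ∧
    Filter.Tendsto (P x) Filter.atTop (nhds 0) := by
  set A : ℝ → ℝ := fun t => ∫ s in t₀..t, a s with hAdef
  have hAc : Continuous A :=
    intervalIntegral.continuous_primitive (fun u v => ha.intervalIntegrable u v) t₀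
  have hsplit : ∀ s t : ℝ, (∫ u in s..t, a u) = A t - A s := by
    intro s t
    have h := intervalIntegral.integral_add_adjacent_intervals (μ := MeasureTheory.volume)
      (ha.intervalIntegrable t₀ s) (ha.intervalIntegrable s t)
    simp only [hAdef]
    linarith
  -- extended x
  set y : ℝ → ℝ := fun t => x (max t t₀) with hydef
  have hyc : Continuous y :=
    hxc.comp_continuous (continuous_id.max continuous_const) (fun t => Set.mem_Ici.2 (le_max_right _ _))
  have hyL : ∀ t, |y t| ≤ L := fun t => hxL _ (le_max_right _ _)
  have hyx : ∀ t, t₀ ≤ t → y t = x t := by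
    intro t ht; simp only [hydef, max_eq_left ht]
  have hfc : ContinuousOn f (Set.Icc (-L) L) := by
    have : LipschitzOnWith K_L.toNNReal f (Set.Icc (-L) L) := by
      rw [lipschitzOnWith_iff_dist_le_mul]
      intro u hu v hv
      rw [Real.dist_eq, Real.dist_eq, Real.coe_toNNReal _ hKL.le]
      exact hflip u v (abs_le.2 ⟨hu.1, hu.2⟩) (abs_le.2 ⟨hv.1, hv.2⟩)
    exact this.continuousOn
  have hfb : ∀ u, |u| ≤ L → |f u| ≤ K_L * |u| := by
    intro u hu
    have := hflip u 0 hu (by simp [hL.le])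
    simpa [hf0] using this
  have hF : Continuous (fun t => f (y t)) :=
    hfc.comp_continuous hyc (fun t => abs_le.1 (hyL t))
  set g : ℝ → ℝ := fun s => Real.exp (A s) * (b s * f (y s)) with hgdef
  have hgc : Continuous g := (Real.continuous_exp.comp hAc).mul (hb.mul hF)
  -- key identity
  have hPG : ∀ t, t₀ ≤ t → P x t =
      Real.exp (-A t) * φ₀ + ∫ s in t₀..t, Real.exp (-A t) * g s := by
    intro t ht
    rw [hP]
    congr 1
    apply intervalIntegral.integral_congr
    intro s hs
    rw [Set.uIcc_of_le ht] at hs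
    simp only [hgdef]
    rw [hsplit s t, hyx s hs.1, show -(A t - A s) = -A t + A s by ring, Real.exp_add]
    ring
  -- KK facts
  have hexp0 : Filter.Tendsto (fun t => Real.exp (-A t)) Filter.atTop (nhds 0) :=
    Real.tendsto_exp_neg_atTop_nhds_zero.comp hH3
  have hbdd : BddAbove ((fun t => Real.exp (-A t)) '' Set.Ici t₀) := by
    obtain ⟨M, hM⟩ := (Filter.tendsto_atTop.1 (Filter.tendsto_atTop.2 (fun c =>
      Filter.eventually_atTop.2 ⟨c, fun n hn => hn⟩))) t₀ |>.exists
    have h1 : ∀ᶠ t in Filter.atTop, Real.exp (-A t) ≤ 1 := by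
      filter_upwards [hexp0.eventually (eventually_le_nhds (by norm_num : (0:ℝ) < 1))] with t ht
      exact ht
    obtain ⟨N, hN⟩ := Filter.eventually_atTop.1 h1
    set N' := max t₀ N with hN'
    obtain ⟨C, hC⟩ := ((isCompact_Icc (a := t₀) (b := N')).image
      ((Real.continuous_exp.comp hAc.neg))).bddAbove
    refine ⟨max C 1, ?_⟩
    rintro v ⟨t, ht, rfl⟩
    rcases le_total t N' with h | h
    · exact le_trans (hC ⟨t, ⟨ht, h⟩, rfl⟩) (le_max_left _ _)
    · exact le_trans (hN t (le_trans (le_max_right _ _) h)) (le_max_right _ _)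
  have hKKle : ∀ t, t₀ ≤ t → Real.exp (-A t) ≤ KK := by
    intro t ht
    rw [hKK]
    exact le_csSup hbdd ⟨t, ht, rfl⟩
  have hKK0 : 0 < KK := lt_of_lt_of_le (Real.exp_pos _) (hKKle t₀ le_rfl)
  -- main integral bound
  have haux : ∀ T t : ℝ, t₀ ≤ T → T ≤ t → ∀ c : ℝ, 0 ≤ c →
      (∀ s ∈ Set.Icc T t, |f (y s)| ≤ K_L * c) →
      |∫ s in T..t, Real.exp (-A t) * g s| ≤ α * c := by
    intro T t hT hTt c hc hfy
    have hint1 : IntervalIntegrable (fun s => |Real.exp (-A t) * g s|) MeasureTheory.volume T t :=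
      ((continuous_const.mul hgc).abs).intervalIntegrable T t
    have hint2 : IntervalIntegrable
        (fun s => Real.exp (A s - A t) * |b s| * (K_L * c)) MeasureTheory.volume T t :=
      (((Real.continuous_exp.comp (hAc.sub continuous_const)).mul hb.abs).mul
        continuous_const).intervalIntegrable T t
    have step1 : |∫ s in T..t, Real.exp (-A t) * g s| ≤
        ∫ s in T..t, |Real.exp (-A t) * g s| :=
      intervalIntegral.abs_integral_le_integral_abs hTt
    have step2 : (∫ s in T..t, |Real.exp (-A t) * g s|) ≤
        ∫ s in T..t, Real.exp (A s - A t) * |b s| * (K_L * c) := by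
      apply intervalIntegral.integral_mono_on hTt hint1 hint2
      intro s hs
      simp only [hgdef]
      rw [abs_mul, abs_mul, abs_mul, Real.abs_exp, Real.abs_exp,
        show A s - A t = -A t + A s by ring, Real.exp_add]
      have h1 : |b s| * |f (y s)| ≤ |b s| * (K_L * c) :=
        mul_le_mul_of_nonneg_left (hfy s hs) (abs_nonneg _)
      calc Real.exp (-A t) * (Real.exp (A s) * (|b s| * |f (y s)|))
          ≤ Real.exp (-A t) * (Real.exp (A s) * (|b s| * (K_L * c))) := by
            apply mul_le_mul_of_nonneg_left _ (Real.exp_pos _).le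
            exact mul_le_mul_of_nonneg_left h1 (Real.exp_pos _).le
        _ = Real.exp (-A t) * Real.exp (A s) * |b s| * (K_L * c) := by ring
    have step3 : (∫ s in T..t, Real.exp (A s - A t) * |b s| * (K_L * c)) =
        (K_L * c) * ∫ s in T..t, Real.exp (A s - A t) * |b s| := by
      rw [← intervalIntegral.integral_const_mul]
      congr 1; funext s; ring
    have hpos : (0:ℝ) ≤ ∫ s in t₀..T, Real.exp (A s - A t) * |b s| := by
      apply intervalIntegral.integral_nonneg hT
      intro s _
      positivity
    have hadd : (∫ s in t₀..T, Real.exp (A s - A t) * |b s|)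
        + (∫ s in T..t, Real.exp (A s - A t) * |b s|)
        = ∫ s in t₀..t, Real.exp (A s - A t) * |b s| :=
      intervalIntegral.integral_add_adjacent_intervals
        (((Real.continuous_exp.comp (hAc.sub continuous_const)).mul hb.abs).intervalIntegrable _ _)
        (((Real.continuous_exp.comp (hAc.sub continuous_const)).mul hb.abs).intervalIntegrable _ _)
    have hcongr : (∫ s in t₀..t, Real.exp (A s - A t) * |b s|)
        = ∫ s in t₀..t, Real.exp (-∫ u in s..t, a u) * |b s| := by
      apply intervalIntegral.integral_congr
      intro s _
      show Real.exp (A s - A t) * |b s| = Real.exp (-∫ u in s..t, a u) * |b s|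
      rw [hsplit s t, neg_sub]
    have step4 : (K_L * c) * (∫ s in T..t, Real.exp (A s - A t) * |b s|) ≤ α * c := by
      have hα := hαint t (le_trans hT hTt)
      have h2 : K_L * (∫ s in T..t, Real.exp (A s - A t) * |b s|) ≤ α := by
        calc K_L * (∫ s in T..t, Real.exp (A s - A t) * |b s|)
            ≤ K_L * (∫ s in t₀..t, Real.exp (A s - A t) * |b s|) := by
              apply mul_le_mul_of_nonneg_left _ hKL.le
              linarith
          _ = K_L * ∫ s in t₀..t, Real.exp (-∫ u in s..t, a u) * |b s| := by rw [hcongr]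
          _ ≤ α := hα
      calc (K_L * c) * (∫ s in T..t, Real.exp (A s - A t) * |b s|)
          = (K_L * (∫ s in T..t, Real.exp (A s - A t) * |b s|)) * c := by ring
        _ ≤ α * c := mul_le_mul_of_nonneg_right h2 hc
    calc |∫ s in T..t, Real.exp (-A t) * g s|
        ≤ ∫ s in T..t, |Real.exp (-A t) * g s| := step1
      _ ≤ ∫ s in T..t, Real.exp (A s - A t) * |b s| * (K_L * c) := step2
      _ = (K_L * c) * ∫ s in T..t, Real.exp (A s - A t) * |b s| := step3
      _ ≤ α * c := step4
  refine ⟨?_, ?_, ?_, ?_⟩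
  · -- continuity
    have hGc : Continuous (fun t => Real.exp (-A t) * φ₀ +
        Real.exp (-A t) * ∫ s in t₀..t, g s) :=
      ((Real.continuous_exp.comp hAc.neg).mul continuous_const).add
        ((Real.continuous_exp.comp hAc.neg).mul
          (intervalIntegral.continuous_primitive (fun u v => hgc.intervalIntegrable u v) t₀))
    apply hGc.continuousOn.congr
    intro t ht
    rw [hPG t ht, intervalIntegral.integral_const_mul]
  · -- initial value
    rw [hP]
    simp
  · -- bound
    intro t ht
    rw [hPG t ht]
    have h1 : |Real.exp (-A t) * φ₀| ≤ δ * KK := by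
      rw [abs_mul, Real.abs_exp]
      calc Real.exp (-A t) * |φ₀| ≤ KK * δ :=
          mul_le_mul (hKKle t ht) hφ (abs_nonneg _) hKK0.le
        _ = δ * KK := by ring
    have h2 : |∫ s in t₀..t, Real.exp (-A t) * g s| ≤ α * L := by
      apply haux t₀ t le_rfl ht L hL.le
      intro s _
      calc |f (y s)| ≤ K_L * |y s| := hfb _ (hyL s)
        _ ≤ K_L * L := mul_le_mul_of_nonneg_left (hyL s) hKL.le
    calc |Real.exp (-A t) * φ₀ + ∫ s in t₀..t, Real.exp (-A t) * g s|
        ≤ |Real.exp (-A t) * φ₀| + |∫ s in t₀..t, Real.exp (-A t) * g s| := abs_add_le _ _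
      _ ≤ δ * KK + α * L := add_le_add h1 h2
  · -- tendsto 0
    rw [Metric.tendsto_atTop]
    intro ε hε
    obtain ⟨T₁, hT₁⟩ := (Metric.tendsto_atTop.1 hx0) (ε / 2) (half_pos hε)
    set T := max t₀ T₁ with hTdef
    have hTt₀ : t₀ ≤ T := le_max_left _ _
    have hxsmall : ∀ s, T ≤ s → |x s| ≤ ε / 2 := by
      intro s hs
      have := hT₁ s (le_trans (le_max_right _ _) hs)
      rw [Real.dist_eq, sub_zero] at this
      exact this.le
    set C := ∫ s in t₀..T, g s with hCdef
    have htend : Filter.Tendsto (fun t => Real.exp (-A t) * (|φ₀| + |C|))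
        Filter.atTop (nhds 0) := by
      have := hexp0.mul_const (|φ₀| + |C|)
      rwa [zero_mul] at this
    obtain ⟨N, hN⟩ := (Metric.tendsto_atTop.1 htend) (ε / 2) (half_pos hε)
    refine ⟨max N T, fun t ht => ?_⟩
    have htT : T ≤ t := le_trans (le_max_right _ _) ht
    have htt₀ : t₀ ≤ t := le_trans hTt₀ htT
    have htN : N ≤ t := le_trans (le_max_left _ _) ht
    rw [Real.dist_eq, sub_zero, hPG t htt₀]
    have hsplitint : (∫ s in t₀..t, Real.exp (-A t) * g s) =
        (∫ s in t₀..T, Real.exp (-A t) * g s) + ∫ s in T..t, Real.exp (-A t) * g s :=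
      (intervalIntegral.integral_add_adjacent_intervals
        ((continuous_const.mul hgc).intervalIntegrable _ _)
        ((continuous_const.mul hgc).intervalIntegrable _ _)).symm
    have hfirst : (∫ s in t₀..T, Real.exp (-A t) * g s) = Real.exp (-A t) * C := by
      rw [hCdef, intervalIntegral.integral_const_mul]
    have hmid : |∫ s in T..t, Real.exp (-A t) * g s| ≤ α * (ε / 2) := by
      apply haux T t hTt₀ htT (ε / 2) (half_pos hε).le
      intro s hs
      have hst₀ : t₀ ≤ s := le_trans hTt₀ hs.1
      calc |f (y s)| ≤ K_L * |y s| := hfb _ (hyL s)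
        _ ≤ K_L * (ε / 2) := by
            apply mul_le_mul_of_nonneg_left _ hKL.le
            rw [hyx s hst₀]
            exact hxsmall s hs.1
    have hNbound : Real.exp (-A t) * (|φ₀| + |C|) < ε / 2 := by
      have := hN t htN
      rw [Real.dist_eq, sub_zero] at this
      exact lt_of_le_of_lt (le_abs_self _) this
    calc |Real.exp (-A t) * φ₀ + ∫ s in t₀..t, Real.exp (-A t) * g s|
        = |Real.exp (-A t) * φ₀ + (Real.exp (-A t) * C
            + ∫ s in T..t, Real.exp (-A t) * g s)| := by rw [hsplitint, hfirst]
      _ ≤ |Real.exp (-A t) * φ₀| + (|Real.exp (-A t) * C|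
            + |∫ s in T..t, Real.exp (-A t) * g s|) :=
          le_trans (abs_add_le _ _) (by gcongr; exact abs_add_le _ _)
      _ ≤ Real.exp (-A t) * (|φ₀| + |C|) + α * (ε / 2) := by
          rw [abs_mul, abs_mul, Real.abs_exp]
          linarith [hmid]
      _ < ε / 2 + ε / 2 := by
          have : α * (ε / 2) ≤ 1 * (ε / 2) :=
            mul_le_mul_of_nonneg_right hα1.le (half_pos hε).le
          rw [one_mul] at this
          have h3 : α * (ε / 2) < ε / 2 := by
            calc α * (ε / 2) < 1 * (ε / 2) :=
              mul_lt_mul_of_pos_right hα1 (half_pos hε)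
            _ = ε / 2 := one_mul _
          linarith [hNbound]
      _ = ε := add_halves ε
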